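/- arXiv:1405.6584 — 3 statements merged into one kernel-verified Lean document; each statement's English description precedes it below -/
import Mathlib

section
/- Under the same setup, with ∫ f dP1 = 0 and γ < 1, the cross term satisfies |∫ f(x)g(z) dP(x,z)| ≤ γ‖f‖‖g‖, where ‖f‖² = ∫ f² dP1 (= ∫ f² dP since f depends on x alone) and ‖g‖² = ∫ g² dP2. -/
open MeasureTheory
open scoped ENNReal NNReal

/-- Cauchy–Schwarz for integrals of real functions in L². -/
lemma cs_integral {α : Type*} [MeasurableSpace α] {μ : Measure α} {u v : α → ℝ}
    (hu : MemLp u 2 μ) (hv : MemLp v 2 μ) :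
    |∫ x, u x * v x ∂μ| ≤ Real.sqrt (∫ x, u x ^ 2 ∂μ) * Real.sqrt (∫ x, v x ^ 2 ∂μ) := by
  set A := ∫ x, u x ^ 2 ∂μ with hA
  set B := ∫ x, v x ^ 2 ∂μ with hB
  set C := ∫ x, u x * v x ∂μ with hC
  have hA0 : 0 ≤ A := integral_nonneg fun x => sq_nonneg _
  have hB0 : 0 ≤ B := integral_nonneg fun x => sq_nonneg _
  have hu2 : Integrable (fun x => u x ^ 2) μ := hu.integrable_sq
  have hv2 : Integrable (fun x => v x ^ 2) μ := hv.integrable_sq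
  have huv : Integrable (fun x => u x * v x) μ := by
    have := hv.smul (φ := u) hu (p := 2) (q := 2) (r := 1)
    simpa [smul_eq_mul, Pi.mul_def] using memLp_one_iff_integrable.mp this
  have key : ∀ t : ℝ, 0 ≤ A * (t * t) + (2 * C) * t + B := by
    intro t
    have h1 : 0 ≤ ∫ x, (t * u x + v x) ^ 2 ∂μ := integral_nonneg fun x => sq_nonneg _
    have h2 : ∫ x, (t * u x + v x) ^ 2 ∂μ = A * (t * t) + (2 * C) * t + B := by
      have hptw : ∀ x, (t * u x + v x) ^ 2
          = (t * t) * u x ^ 2 + (2 * t) * (u x * v x) + v x ^ 2 := fun x => by ring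
      simp_rw [hptw]
      have hI1 : Integrable (fun x => (t * t) * u x ^ 2 + (2 * t) * (u x * v x)) μ :=
        (hu2.const_mul _).add (huv.const_mul _)
      rw [integral_add hI1 hv2, integral_add (hu2.const_mul _) (huv.const_mul _),
        MeasureTheory.integral_const_mul, MeasureTheory.integral_const_mul]
      ring
    linarith [h2 ▸ h1]
  have hdisc : discrim A (2 * C) B ≤ 0 := discrim_le_zero key
  have hCsq : C ^ 2 ≤ A * B := by
    rw [discrim] at hdisc; nlinarith
  calc |C| = Real.sqrt (C ^ 2) := (Real.sqrt_sq_eq_abs C).symm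
    _ ≤ Real.sqrt (A * B) := Real.sqrt_le_sqrt hCsq
    _ = Real.sqrt A * Real.sqrt B := Real.sqrt_mul hA0 B

theorem stmt1 {α β : Type*} [MeasurableSpace α] [MeasurableSpace β]
    (P1 : Measure α) (P2 : Measure β)
    [IsProbabilityMeasure P1] [IsProbabilityMeasure P2]
    (r : α × β → ℝ)
    (P : Measure (α × β)) [IsProbabilityMeasure P]
    (hP : P = (P1.prod P2).withDensity (fun p => ENNReal.ofReal (r p)))
    (f : α → ℝ) (g : β → ℝ)
    (hf2 : MemLp f 2 P1) (hg2 : MemLp g 2 P2)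
    (hfg : Integrable (fun p : α × β => f p.1 * g p.2) P)
    (hf0 : ∫ x, f x ∂P1 = 0)
    (γ : ℝ)
    (hγ : γ = Real.sqrt (∫ p, (r p - 1) ^ 2 ∂(P1.prod P2)))
    (hγint : Integrable (fun p => (r p - 1) ^ 2) (P1.prod P2))
    (hγ1 : γ < 1) :
    |∫ p, f p.1 * g p.2 ∂P| ≤
      γ * Real.sqrt (∫ x, (f x) ^ 2 ∂P1) * Real.sqrt (∫ z, (g z) ^ 2 ∂P2) := by
  set μ := P1.prod P2 with hμ
  -- absolute continuity and RN derivative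
  have hPμ : P ≪ μ := hP ▸ withDensity_absolutelyContinuous μ _
  have hρmeas : Measurable (P.rnDeriv μ) := Measure.measurable_rnDeriv P μ
  have hPd : μ.withDensity (P.rnDeriv μ) = P := Measure.withDensity_rnDeriv_eq P μ hPμ
  -- a measurable version of (r-1)^2
  set q := hγint.1.mk _ with hqdef
  have hqmeas : Measurable q := hγint.1.stronglyMeasurable_mk.measurable
  have hq_ae : (fun p => (r p - 1) ^ 2) =ᵐ[μ] q := hγint.1.ae_eq_mk
  have hq_int : Integrable q μ := hγint.congr hq_ae
  -- squeeze the RN derivative between 1 ± √q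
  have hsetint : ∀ s : Set (α × β), MeasurableSet s →
      ∫⁻ p in s, P.rnDeriv μ p ∂μ = ∫⁻ p in s, ENNReal.ofReal (r p) ∂μ := by
    intro s hs
    rw [Measure.setLIntegral_rnDeriv' hPμ hs, hP, withDensity_apply _ hs]
  have hup : P.rnDeriv μ ≤ᵐ[μ] fun p => 1 + ENNReal.ofReal (Real.sqrt (q p)) := by
    apply ae_le_of_forall_setLIntegral_le_of_sigmaFinite₀ hρmeas.aemeasurable
    intro s hs _
    rw [hsetint s hs]
    apply lintegral_mono_ae
    apply ae_restrict_of_ae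
    filter_upwards [hq_ae] with p hp
    have h1 : r p ≤ 1 + Real.sqrt (q p) := by
      have : Real.sqrt (q p) = |r p - 1| := by rw [← hp, Real.sqrt_sq_eq_abs]
      rw [this]
      cases abs_cases (r p - 1) with
      | inl h => linarith [h.1]
      | inr h => linarith [h.1, abs_nonneg (r p - 1)]
    calc ENNReal.ofReal (r p) ≤ ENNReal.ofReal (1 + Real.sqrt (q p)) :=
          ENNReal.ofReal_le_ofReal h1
      _ = 1 + ENNReal.ofReal (Real.sqrt (q p)) := by
          rw [ENNReal.ofReal_add zero_le_one (Real.sqrt_nonneg _), ENNReal.ofReal_one]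
  have hlow : (fun p => ENNReal.ofReal (1 - Real.sqrt (q p))) ≤ᵐ[μ] P.rnDeriv μ := by
    apply ae_le_of_forall_setLIntegral_le_of_sigmaFinite₀
      (measurable_const.sub (hqmeas.sqrt)).ennreal_ofReal.aemeasurable
    intro s hs _
    rw [hsetint s hs]
    apply lintegral_mono_ae
    apply ae_restrict_of_ae
    filter_upwards [hq_ae] with p hp
    apply ENNReal.ofReal_le_ofReal
    have : Real.sqrt (q p) = |r p - 1| := by rw [← hp, Real.sqrt_sq_eq_abs]
    show 1 - Real.sqrt (q p) ≤ r p
    rw [this]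
    cases abs_cases (r p - 1) with
    | inl h => linarith [h.1, abs_nonneg (r p - 1)]
    | inr h => linarith [h.1]
  have hfin : ∀ᵐ p ∂μ, P.rnDeriv μ p < ⊤ := Measure.rnDeriv_lt_top P μ
  -- d := density - 1, satisfies d² ≤ q a.e.
  set d : α × β → ℝ := fun p => (P.rnDeriv μ p).toReal - 1 with hd_def
  have hdmeas : Measurable d := hρmeas.ennreal_toReal.sub measurable_const
  have hd_bound : ∀ᵐ p ∂μ, d p ^ 2 ≤ q p := by
    filter_upwards [hup, hlow, hfin, hq_ae] with p h1 h2 h3 h4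
    have hs0 : 0 ≤ Real.sqrt (q p) := Real.sqrt_nonneg _
    have hqp : Real.sqrt (q p) ^ 2 = q p := Real.sq_sqrt (h4 ▸ sq_nonneg _)
    have hub : (P.rnDeriv μ p).toReal ≤ 1 + Real.sqrt (q p) := by
      have := ENNReal.toReal_mono (by simp [ENNReal.ofReal_ne_top]) h1
      rwa [ENNReal.toReal_add ENNReal.one_ne_top ENNReal.ofReal_ne_top, ENNReal.toReal_one,
        ENNReal.toReal_ofReal hs0] at this
    have hlb : 1 - Real.sqrt (q p) ≤ (P.rnDeriv μ p).toReal := by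
      rcases le_or_gt (1 - Real.sqrt (q p)) 0 with h | h
      · exact h.trans ENNReal.toReal_nonneg
      · have := ENNReal.toReal_mono h3.ne h2
        rwa [ENNReal.toReal_ofReal h.le] at this
      
    calc d p ^ 2 ≤ Real.sqrt (q p) ^ 2 := by
          apply sq_le_sq'
          · simp only [hd_def]; linarith
          · simp only [hd_def]; linarith
      _ = q p := hqp
  have hd2_int : Integrable (fun p => d p ^ 2) μ := by
    apply hq_int.mono' (hdmeas.pow_const 2).aestronglyMeasurable
    filter_upwards [hd_bound] with p hp
    rw [Real.norm_eq_abs, abs_of_nonneg (sq_nonneg _)]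
    exact hp
  have hd2 : MemLp d 2 μ :=
    (memLp_two_iff_integrable_sq hdmeas.aestronglyMeasurable).2 hd2_int
  have hdγ : Real.sqrt (∫ p, d p ^ 2 ∂μ) ≤ γ := by
    rw [hγ]
    apply Real.sqrt_le_sqrt
    rw [integral_congr_ae hq_ae]
    exact integral_mono_ae hd2_int hq_int hd_bound
  -- fg is in L²(μ)
  have hfg_aesm : AEStronglyMeasurable (fun p : α × β => f p.1 * g p.2) μ :=
    (hf2.1.comp_fst).mul (hg2.1.comp_snd)
  have hfg_sq_int : Integrable (fun p : α × β => (f p.1 * g p.2) ^ 2) μ := by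
    simp_rw [mul_pow]
    exact hf2.integrable_sq.mul_prod hg2.integrable_sq
  have hfg2 : MemLp (fun p : α × β => f p.1 * g p.2) 2 μ :=
    (memLp_two_iff_integrable_sq hfg_aesm).2 hfg_sq_int
  have hfgμ_int : Integrable (fun p : α × β => f p.1 * g p.2) μ :=
    (hf2.integrable one_le_two).mul_prod (hg2.integrable one_le_two)
  have hfgd_int : Integrable (fun p : α × β => (f p.1 * g p.2) * d p) μ := by
    have := hd2.smul (φ := fun p : α × β => f p.1 * g p.2) hfg2 (p := 2) (q := 2) (r := 1)
    simpa [smul_eq_mul, Pi.mul_def] using memLp_one_iff_integrable.mp this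
  -- rewrite the integral over P
  have key : ∫ p, f p.1 * g p.2 ∂P = ∫ p, (P.rnDeriv μ p).toReal * (f p.1 * g p.2) ∂μ := by
    have hcongr : μ.withDensity (P.rnDeriv μ)
        = μ.withDensity (fun p => ((P.rnDeriv μ p).toNNReal : ℝ≥0∞)) := by
      apply withDensity_congr_ae
      filter_upwards [hfin] with p hp
      rw [ENNReal.coe_toNNReal hp.ne]
    conv_lhs => rw [← hPd, hcongr]
    rw [integral_withDensity_eq_integral_smul hρmeas.ennreal_toNNReal]
    rfl
  have hsplit : ∫ p, (P.rnDeriv μ p).toReal * (f p.1 * g p.2) ∂μ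
      = ∫ p, f p.1 * g p.2 ∂μ + ∫ p, (f p.1 * g p.2) * d p ∂μ := by
    have hptw : ∀ p : α × β, (P.rnDeriv μ p).toReal * (f p.1 * g p.2)
        = f p.1 * g p.2 + (f p.1 * g p.2) * d p := by
      intro p; simp only [hd_def]; ring
    simp_rw [hptw]
    exact integral_add hfgμ_int hfgd_int
  have hzero : ∫ p, f p.1 * g p.2 ∂μ = 0 := by
    rw [hμ, integral_prod_mul, hf0, zero_mul]
  -- put everything together
  have hCS := cs_integral hfg2 hd2
  have hfgnorm : Real.sqrt (∫ p, (f p.1 * g p.2) ^ 2 ∂μ)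
      = Real.sqrt (∫ x, f x ^ 2 ∂P1) * Real.sqrt (∫ z, g z ^ 2 ∂P2) := by
    have : ∫ p, (f p.1 * g p.2) ^ 2 ∂μ = (∫ x, f x ^ 2 ∂P1) * ∫ z, g z ^ 2 ∂P2 := by
      simp_rw [mul_pow]
      exact integral_prod_mul (fun x => f x ^ 2) (fun z => g z ^ 2)
    rw [this, Real.sqrt_mul (integral_nonneg fun x => sq_nonneg _)]
  rw [key, hsplit, hzero, zero_add]
  calc |∫ p, (f p.1 * g p.2) * d p ∂μ|
      ≤ Real.sqrt (∫ p, (f p.1 * g p.2) ^ 2 ∂μ) * Real.sqrt (∫ p, d p ^ 2 ∂μ) := hCS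
    _ = Real.sqrt (∫ x, f x ^ 2 ∂P1) * Real.sqrt (∫ z, g z ^ 2 ∂P2)
        * Real.sqrt (∫ p, d p ^ 2 ∂μ) := by rw [hfgnorm]
    _ ≤ Real.sqrt (∫ x, f x ^ 2 ∂P1) * Real.sqrt (∫ z, g z ^ 2 ∂P2) * γ := by
        apply mul_le_mul_of_nonneg_left hdγ
        positivity
    _ = γ * Real.sqrt (∫ x, f x ^ 2 ∂P1) * Real.sqrt (∫ z, g z ^ 2 ∂P2) := by ring
end

section
/- For nonnegative reals a, b and 1 ≤ q ≤ 2, one has (a+b)^q − a^q ≤ 2a^{q−1}b + 2b^q. -/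
open Real

lemma subadd_rpow (a b p : ℝ) (ha : 0 ≤ a) (hb : 0 ≤ b) (hp : 0 ≤ p) (hp1 : p ≤ 1) :
    (a + b) ^ p ≤ a ^ p + b ^ p := by
  have := NNReal.rpow_add_le_add_rpow a.toNNReal b.toNNReal hp hp1
  rw [← Real.toNNReal_add ha hb] at this
  have h := NNReal.coe_le_coe.mpr this
  push_cast [NNReal.coe_rpow, Real.coe_toNNReal _ ha, Real.coe_toNNReal _ hb,
    Real.coe_toNNReal _ (add_nonneg ha hb)] at h
  exact h

lemma key1 (a b q : ℝ) (ha : 0 ≤ a) (hb : 0 ≤ b) (hab : 0 < a + b) (hq1 : 1 ≤ q) :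
    (a + b) ^ q ≤ a ^ q + q * (a + b) ^ (q - 1) * b := by
  have hs : -1 ≤ -(b / (a + b)) := by
    rw [neg_le_neg_iff]
    exact div_le_one_of_le₀ (by linarith) hab.le
  have hber := one_add_mul_self_le_rpow_one_add hs hq1
  have h1s : 1 + -(b / (a + b)) = a / (a + b) := by
    field_simp
    ring
  rw [h1s] at hber
  -- hber : 1 + q * -(b/(a+b)) ≤ (a/(a+b))^q
  have hmul := mul_le_mul_of_nonneg_right hber (Real.rpow_nonneg hab.le q)
  rw [Real.div_rpow ha hab.le, div_mul_cancel₀ _ (by positivity : (a+b)^q ≠ 0)] at hmul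
  -- hmul : (1 - q*(b/(a+b))) * (a+b)^q ≤ a^q
  have hrw : (1 + q * -(b / (a + b))) * (a + b) ^ q
      = (a + b) ^ q - q * (a + b) ^ (q - 1) * b := by
    have : (a + b) ^ q = (a + b) ^ (q - 1) * (a + b) := by
      rw [← Real.rpow_add_one hab.ne' (q-1)]; ring_nf
    rw [this]
    field_simp
    ring
  rw [hrw] at hmul
  linarith

theorem stmt2 (a b q : ℝ) (ha : 0 ≤ a) (hb : 0 ≤ b) (hq1 : 1 ≤ q) (hq2 : q ≤ 2) :
    (a + b) ^ q - a ^ q ≤ 2 * a ^ (q - 1) * b + 2 * b ^ q := by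
  rcases eq_or_lt_of_le hb with rfl | hb'
  · simp; positivity
  have hab : 0 < a + b := by linarith
  have h1 := key1 a b q ha hb hab hq1
  have h2 := subadd_rpow a b (q - 1) ha hb (by linarith) (by linarith)
  have hq0 : 0 ≤ q := by linarith
  have hbq : b ^ (q - 1) * b = b ^ q := by
    rw [← Real.rpow_add_one hb'.ne' (q-1)]; ring_nf
  have h3 : q * (a + b) ^ (q - 1) * b ≤ 2 * (a ^ (q - 1) + b ^ (q - 1)) * b := by
    apply mul_le_mul_of_nonneg_right _ hb
    calc q * (a + b) ^ (q - 1) ≤ 2 * (a + b) ^ (q - 1) := by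
          apply mul_le_mul_of_nonneg_right hq2 (Real.rpow_nonneg hab.le _)
      _ ≤ 2 * (a ^ (q - 1) + b ^ (q - 1)) := by linarith
  nlinarith [Real.rpow_nonneg hb (q-1), Real.rpow_nonneg ha (q-1)]
end

section
/- Let f be a square-integrable function of X, where (X,Z) has joint distribution P with density r with respect to the product of its marginals, and suppose ∫ f dP1 = 0. Define the projection f_P(z) := E(f(X) | Z = z) and the anti-projection f_A := f − f_P. Then ‖f_P‖ ≤ γ‖f‖, where γ² := ∫(r−1)² d(P1×P2). -/
open MeasureTheory

theorem stmt3 {α β : Type*} [MeasurableSpace α] [MeasurableSpace β]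
    (P1 : Measure α) (P2 : Measure β)
    [IsProbabilityMeasure P1] [IsProbabilityMeasure P2]
    (r : α × β → ℝ)
    (P : Measure (α × β)) [IsProbabilityMeasure P]
    (hP : P = (P1.prod P2).withDensity (fun p => ENNReal.ofReal (r p)))
    (f : α → ℝ)
    (hf2 : MemLp f 2 P1)
    (hf0 : ∫ x, f x ∂P1 = 0)
    (fP : β → ℝ)
    (hfP : ∀ z, fP z = ∫ x, f x * r (x, z) ∂P1)
    (hfP2 : MemLp fP 2 P2)
    (γ : ℝ)
    (hγ : γ = Real.sqrt (∫ p, (r p - 1) ^ 2 ∂(P1.prod P2)))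
    (hγint : Integrable (fun p => (r p - 1) ^ 2) (P1.prod P2)) :
    Real.sqrt (∫ z, (fP z) ^ 2 ∂P2) ≤ γ * Real.sqrt (∫ x, (f x) ^ 2 ∂P1) := by
  set A : ℝ := ∫ x, (f x) ^ 2 ∂P1 with hAdef
  have hA : 0 ≤ A := integral_nonneg fun x => sq_nonneg _
  set B : β → ℝ := fun z => ∫ x, (r (x, z) - 1) ^ 2 ∂P1 with hBdef
  have hBnn : ∀ z, 0 ≤ B z := fun z => integral_nonneg fun x => sq_nonneg _
  have hfint : Integrable f P1 := hf2.integrable one_le_two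
  -- pointwise bound a.e. z
  have key : ∀ᵐ z ∂P2, (fP z) ^ 2 ≤ A * B z := by
    filter_upwards [hγint.prod_left_ae] with z Hz
    by_cases hI : Integrable (fun x => f x * r (x, z)) P1
    · -- Cauchy-Schwarz case
      set g : α → ℝ := fun x => (f x * r (x, z) - f x) * (f x)⁻¹ with hgdef
      have hgAEM : AEStronglyMeasurable g P1 :=
        ((hI.1.sub hf2.1).aemeasurable.mul hf2.1.aemeasurable.inv).aestronglyMeasurable
      have hfg : ∀ x, f x * g x = f x * (r (x, z) - 1) := by
        intro x
        by_cases h : f x = 0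
        · simp [hgdef, h]
        · rw [show g x = r (x, z) - 1 by
            show (f x * r (x, z) - f x) * (f x)⁻¹ = r (x, z) - 1
            rw [show f x * r (x, z) - f x = (r (x, z) - 1) * f x by ring, mul_assoc,
              mul_inv_cancel₀ h, mul_one]]
      have hgsq : ∀ x, g x ^ 2 ≤ (r (x, z) - 1) ^ 2 := by
        intro x
        by_cases h : f x = 0
        · simp [hgdef, h]
          positivity
        · have : g x = r (x, z) - 1 := by
            show (f x * r (x, z) - f x) * (f x)⁻¹ = r (x, z) - 1
            rw [show f x * r (x, z) - f x = (r (x, z) - 1) * f x by ring, mul_assoc,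
              mul_inv_cancel₀ h, mul_one]
          rw [this]
      have hg2int : Integrable (fun x => g x ^ 2) P1 := by
        refine Hz.mono' ((hgAEM.aemeasurable.pow_const 2).aestronglyMeasurable) ?_
        filter_upwards with x
        rw [Real.norm_eq_abs, abs_of_nonneg (sq_nonneg _)]
        exact hgsq x
      have hgL2 : MemLp g 2 P1 := (memLp_two_iff_integrable_sq hgAEM).mpr hg2int
      have hfr1int : Integrable (fun x => f x * (r (x, z) - 1)) P1 := by
        have : (fun x => f x * (r (x, z) - 1)) = fun x => f x * r (x, z) - f x := by
          funext x; ring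
        rw [this]; exact hI.sub hfint
      have hfPz : fP z = ∫ x, f x * (r (x, z) - 1) ∂P1 := by
        have : (fun x => f x * (r (x, z) - 1)) = fun x => f x * r (x, z) - f x := by
          funext x; ring
        rw [this, integral_sub hI hfint, hf0, sub_zero, hfP z]
      -- Cauchy-Schwarz
      have habs : MemLp (fun x => |f x|) (ENNReal.ofReal 2) P1 := by
        have := hf2.norm
        simp only [Real.norm_eq_abs] at this
        convert this using 2
        norm_num
      have hgabs : MemLp (fun x => |g x|) (ENNReal.ofReal 2) P1 := by
        have := hgL2.norm
        simp only [Real.norm_eq_abs] at this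
        convert this using 2
        norm_num
      have hconj : Real.HolderConjugate 2 2 := Real.holderConjugate_iff.mpr ⟨one_lt_two, by norm_num⟩
      have CS := integral_mul_le_Lp_mul_Lq_of_nonneg (μ := P1) hconj
        (Filter.Eventually.of_forall fun x => abs_nonneg (f x))
        (Filter.Eventually.of_forall fun x => abs_nonneg (g x)) habs hgabs
      have hRf : ∫ x, |f x| ^ (2 : ℝ) ∂P1 = A := by
        simp only [Real.rpow_two, sq_abs]
        rfl
      have hRg : ∫ x, |g x| ^ (2 : ℝ) ∂P1 = ∫ x, g x ^ 2 ∂P1 := by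
        simp only [Real.rpow_two, sq_abs]
      rw [hRf, hRg, ← Real.sqrt_eq_rpow, ← Real.sqrt_eq_rpow] at CS
      have hgI : 0 ≤ ∫ x, g x ^ 2 ∂P1 := integral_nonneg fun x => sq_nonneg _
      have habsfP : |fP z| ≤ Real.sqrt A * Real.sqrt (∫ x, g x ^ 2 ∂P1) := by
        rw [hfPz]
        calc |∫ x, f x * (r (x, z) - 1) ∂P1| = |∫ x, f x * g x ∂P1| := by
              congr 1; exact integral_congr_ae (Filter.Eventually.of_forall fun x => (hfg x).symm)
          _ ≤ ∫ x, |f x| * |g x| ∂P1 := by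
              simpa [Real.norm_eq_abs, abs_mul] using
                norm_integral_le_integral_norm (μ := P1) (fun x => f x * g x)
          _ ≤ Real.sqrt A * Real.sqrt (∫ x, g x ^ 2 ∂P1) := CS
      have hsq : (fP z) ^ 2 ≤ (Real.sqrt A * Real.sqrt (∫ x, g x ^ 2 ∂P1)) ^ 2 := by
        rw [← sq_abs (fP z)]
        exact pow_le_pow_left₀ (abs_nonneg _) habsfP 2
      rw [mul_pow, Real.sq_sqrt hA, Real.sq_sqrt hgI] at hsq
      exact hsq.trans (mul_le_mul_of_nonneg_left (integral_mono hg2int Hz hgsq) hA)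
    · -- degenerate case: Bochner integral is 0
      have : fP z = 0 := by rw [hfP z, integral_undef hI]
      rw [this]
      simpa using mul_nonneg hA (hBnn z)
  -- integrate the pointwise bound
  have hfPsq : Integrable (fun z => fP z ^ 2) P2 := hfP2.integrable_sq
  have hBint : Integrable B P2 := hγint.integral_prod_right
  have h1 : ∫ z, fP z ^ 2 ∂P2 ≤ ∫ z, A * B z ∂P2 :=
    integral_mono_ae hfPsq (hBint.const_mul A) key
  have h2 : ∫ z, A * B z ∂P2 = A * ∫ p, (r p - 1) ^ 2 ∂(P1.prod P2) := by
    rw [integral_const_mul, integral_prod_symm _ hγint]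
  have hInn : 0 ≤ ∫ p, (r p - 1) ^ 2 ∂(P1.prod P2) := integral_nonneg fun p => sq_nonneg _
  calc Real.sqrt (∫ z, fP z ^ 2 ∂P2) ≤ Real.sqrt (A * ∫ p, (r p - 1) ^ 2 ∂(P1.prod P2)) := by
        apply Real.sqrt_le_sqrt; rw [← h2]; exact h1
    _ = γ * Real.sqrt A := by
        rw [mul_comm A, Real.sqrt_mul hInn, hγ]
    _ = γ * Real.sqrt (∫ x, (f x) ^ 2 ∂P1) := rfl
end
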